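/- arXiv:1501.05708 — 7 statements merged into one kernel-verified Lean document; each statement's English description precedes it below -/
import Mathlib

section
/- Let (ū₁,ū₂,ū₃) be the positive equilibrium of the kinetic system. Along any solution (u₁,u₂,u₃) with positive coordinates, the derivative of V(u(t)) = d(u₁-ū₁-ū₁ln(u₁/ū₁)) + e(u₂-ū₂-ū₂ln(u₂/ū₂)) + (u₃-ū₃-ū₃ln(u₃/ū₃)) equals -ad(u₁-ū₁)² - be(u₂-ū₂)² - c(u₃-ū₃)², which is strictly negative whenever (u₁,u₂,u₃) ≠ (ū₁,ū₂,ū₃). -/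
theorem stmt5 (a b c d e : ℝ) (ha : 0 < a) (hb : 0 < b) (hc : 0 < c)
    (hd : 0 < d) (he : 0 < e)
    (b1 b2 b3 : ℝ) (hb1 : 0 < b1) (hb2 : 0 < b2) (hb3 : 0 < b3)
    (heq1 : a * (1 - b1) = b3) (heq2 : b * (1 - b2) = b3)
    (heq3 : c * b3 = d * b1 + e * b2)
    (u1 u2 u3 : ℝ → ℝ) (t : ℝ)
    (hpos : ∀ s : ℝ, 0 < u1 s ∧ 0 < u2 s ∧ 0 < u3 s)
    (hu1 : HasDerivAt u1 (a * u1 t * (1 - u1 t) - u1 t * u3 t) t)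
    (hu2 : HasDerivAt u2 (b * u2 t * (1 - u2 t) - u2 t * u3 t) t)
    (hu3 : HasDerivAt u3 (-(c * (u3 t) ^ 2) + (d * u1 t + e * u2 t) * u3 t) t) :
    HasDerivAt (fun s =>
        d * (u1 s - b1 - b1 * Real.log (u1 s / b1)) +
        e * (u2 s - b2 - b2 * Real.log (u2 s / b2)) +
        (u3 s - b3 - b3 * Real.log (u3 s / b3)))
      (-(a * d * (u1 t - b1) ^ 2) - b * e * (u2 t - b2) ^ 2
        - c * (u3 t - b3) ^ 2) t ∧
    ((u1 t, u2 t, u3 t) ≠ (b1, b2, b3) →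
      -(a * d * (u1 t - b1) ^ 2) - b * e * (u2 t - b2) ^ 2
        - c * (u3 t - b3) ^ 2 < 0) := by
  obtain ⟨h1p, h2p, h3p⟩ := hpos t
  constructor
  · set P1 := a * u1 t * (1 - u1 t) - u1 t * u3 t with hP1
    set P2 := b * u2 t * (1 - u2 t) - u2 t * u3 t with hP2
    set P3 := -(c * (u3 t) ^ 2) + (d * u1 t + e * u2 t) * u3 t with hP3
    have hA : HasDerivAt (fun s => u1 s - b1 - b1 * Real.log (u1 s / b1))
        (P1 - b1 * ((P1 / b1) / (u1 t / b1))) t :=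
      (hu1.sub_const b1).sub (((hu1.div_const b1).log (by positivity)).const_mul b1)
    have hB : HasDerivAt (fun s => u2 s - b2 - b2 * Real.log (u2 s / b2))
        (P2 - b2 * ((P2 / b2) / (u2 t / b2))) t :=
      (hu2.sub_const b2).sub (((hu2.div_const b2).log (by positivity)).const_mul b2)
    have hC : HasDerivAt (fun s => u3 s - b3 - b3 * Real.log (u3 s / b3))
        (P3 - b3 * ((P3 / b3) / (u3 t / b3))) t :=
      (hu3.sub_const b3).sub (((hu3.div_const b3).log (by positivity)).const_mul b3)
    have h := ((hA.const_mul d).add (hB.const_mul e)).add hC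
    convert h using 1
    case e'_4 | e'_5 | e'_8 => rfl
    have h1 : u1 t ≠ 0 := ne_of_gt h1p
    have h2 : u2 t ≠ 0 := ne_of_gt h2p
    have h3 : u3 t ≠ 0 := ne_of_gt h3p
    field_simp [hP1, hP2, hP3]
    linear_combination
      (d * u1 t * (u1 t - b1) * u2 t * u3 t + 2 * u1 t * u2 t * u3 t * d * (b1 - u1 t)) * heq1 +
      (e * u2 t * (u2 t - b2) * u1 t * u3 t + 2 * u1 t * u2 t * u3 t * e * (b2 - u2 t)) * heq2 +
      (-(u3 t * (u3 t - b3) * u1 t * u2 t) - 2 * u1 t * u2 t * u3 t * (b3 - u3 t)) * heq3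
  · intro hne
    have h1 : a * d * (u1 t - b1) ^ 2 ≥ 0 := by positivity
    have h2 : b * e * (u2 t - b2) ^ 2 ≥ 0 := by positivity
    have h3 : c * (u3 t - b3) ^ 2 ≥ 0 := by positivity
    have : u1 t ≠ b1 ∨ u2 t ≠ b2 ∨ u3 t ≠ b3 := by
      by_contra hcon
      push_neg at hcon
      exact hne (by simp [hcon.1, hcon.2.1, hcon.2.2])
    rcases this with h | h | h
    · have hsq : 0 < (u1 t - b1) ^ 2 :=
        pow_pos (abs_pos.mpr (sub_ne_zero.mpr h)) 2 |>.trans_eq (by rw [sq_abs])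
      nlinarith [mul_pos (mul_pos ha hd) hsq]
    · have hsq : 0 < (u2 t - b2) ^ 2 :=
        pow_pos (abs_pos.mpr (sub_ne_zero.mpr h)) 2 |>.trans_eq (by rw [sq_abs])
      nlinarith [mul_pos (mul_pos hb he) hsq]
    · have hsq : 0 < (u3 t - b3) ^ 2 :=
        pow_pos (abs_pos.mpr (sub_ne_zero.mpr h)) 2 |>.trans_eq (by rw [sq_abs])
      nlinarith [mul_pos hc hsq]
end

section
/- The unique positive equilibrium ū of the kinetic system u₁' = au₁(1-u₁)-u₁u₃, u₂' = bu₂(1-u₂)-u₂u₃, u₃' = -cu₃²+(du₁+eu₂)u₃ is Lyapunov stable (indeed asymptotically stable) on the open positive octant, under the condition abc > max{e(b-a), d(a-b)}. -/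
open Real Set Filter

private lemma phi_lb {β s : ℝ} (hβ : 0 < β) (hs : 0 < s) :
    (Real.sqrt s - Real.sqrt β)^2 ≤ s - β - β * Real.log (s / β) := by
  have h0 : Real.log (Real.sqrt (s/β)) ≤ Real.sqrt (s/β) - 1 :=
    Real.log_le_sub_one_of_pos (by positivity)
  have h1 : Real.log (s/β) = 2 * Real.log (Real.sqrt (s/β)) := by
    rw [Real.log_sqrt (by positivity)]; ring
  have h2 : Real.sqrt (s/β) = Real.sqrt s / Real.sqrt β := Real.sqrt_div hs.le β
  have hsb : Real.sqrt β > 0 := Real.sqrt_pos.2 hβ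
  have hss : Real.sqrt s ≥ 0 := Real.sqrt_nonneg s
  have e1 : Real.sqrt β ^ 2 = β := Real.sq_sqrt hβ.le
  have e2 : Real.sqrt s ^ 2 = s := Real.sq_sqrt hs.le
  have : β * Real.log (s/β) ≤ 2 * Real.sqrt β * Real.sqrt s - 2 * β := by
    rw [h1, h2]
    calc β * (2 * Real.log (Real.sqrt s / Real.sqrt β))
        = 2 * (β * Real.log (Real.sqrt s / Real.sqrt β)) := by ring
      _ ≤ 2 * (β * (Real.sqrt s / Real.sqrt β - 1)) := by
          nlinarith [Real.log_le_sub_one_of_pos (show (0:ℝ) < Real.sqrt s / Real.sqrt β by positivity)]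
      _ = 2 * Real.sqrt β * Real.sqrt s - 2 * β := by
          field_simp; nlinarith [e1]
  nlinarith [this]

private lemma phi_ub {β s : ℝ} (hβ : 0 < β) (hs : 0 < s) :
    s - β - β * Real.log (s / β) ≤ (s - β)^2 / s := by
  have h0 : Real.log (β/s) ≤ β/s - 1 := Real.log_le_sub_one_of_pos (by positivity)
  have h1 : Real.log (β/s) = - Real.log (s/β) := by
    rw [← Real.log_inv]; congr 1; field_simp
  rw [h1] at h0
  have hlog : -(β/s - 1) ≤ Real.log (s/β) := by linarith
  have h2 : β * (-(β/s - 1)) ≤ β * Real.log (s/β) := by nlinarith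
  rw [le_div_iff₀ hs]
  have hx : β/s*s = β := div_mul_cancel₀ β hs.ne'
  nlinarith [h2, sq_nonneg (s - β), mul_le_mul_of_nonneg_right h2 hs.le]

private lemma phi_nonneg {β s : ℝ} (hβ : 0 < β) (hs : 0 < s) :
    0 ≤ s - β - β * Real.log (s / β) :=
  le_trans (sq_nonneg _) (phi_lb hβ hs)

private lemma coord_close {β s r : ℝ} (hβ : 0 < β) (hs : 0 < s) (hr : 0 < r)
    (hφ : s - β - β * Real.log (s / β) < r^2) :
    |s - β| < r * (2 * Real.sqrt β + r) := by
  have hlb := phi_lb hβ hs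
  have hx2 : (Real.sqrt s - Real.sqrt β)^2 < r^2 := lt_of_le_of_lt hlb hφ
  have e1 : Real.sqrt β ^ 2 = β := Real.sq_sqrt hβ.le
  have e2 : Real.sqrt s ^ 2 = s := Real.sq_sqrt hs.le
  have hss : 0 ≤ Real.sqrt s := Real.sqrt_nonneg s
  have hsb : 0 ≤ Real.sqrt β := Real.sqrt_nonneg β
  have hx : |Real.sqrt s - Real.sqrt β| < r := by
    nlinarith [sq_abs (Real.sqrt s - Real.sqrt β), abs_nonneg (Real.sqrt s - Real.sqrt β)]
  have hx1 := abs_lt.1 hx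
  rw [abs_lt]
  constructor <;> nlinarith [hx1.1, hx1.2, sq_nonneg (Real.sqrt s - Real.sqrt β)]

private lemma coord_lower {β s : ℝ} (hβ : 0 < β) (hs : 0 < s)
    (hφ : s - β - β * Real.log (s / β) ≤ β/4) : β/4 ≤ s := by
  have hlb := phi_lb hβ hs
  have e1 : Real.sqrt β ^ 2 = β := Real.sq_sqrt hβ.le
  have e2 : Real.sqrt s ^ 2 = s := Real.sq_sqrt hs.le
  have hss : 0 ≤ Real.sqrt s := Real.sqrt_nonneg s
  have hsb : 0 ≤ Real.sqrt β := Real.sqrt_nonneg β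
  nlinarith [sq_nonneg (Real.sqrt s - Real.sqrt β / 2), sq_nonneg (Real.sqrt s + Real.sqrt β / 2)]

private lemma coord_init {β s δ : ℝ} (hβ : 0 < β) (hδβ : δ ≤ β/2) (hδ : |s - β| < δ) :
    0 < s ∧ s - β - β * Real.log (s / β) ≤ 2 * δ^2 / β := by
  have h1 := abs_lt.1 hδ
  have hs : 0 < s := by linarith
  refine ⟨hs, (phi_ub hβ hs).trans ?_⟩
  rw [div_le_div_iff₀ hs (by positivity)]
  have hδ0 : 0 < δ := lt_of_le_of_lt (abs_nonneg _) hδ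
  nlinarith [mul_pos (show 0 < δ - (s - β) by linarith [h1.2]) (show 0 < δ + (s - β) by linarith [h1.1]),
    mul_nonneg (show (0:ℝ) ≤ 2*s - β by linarith [h1.1]) (sq_nonneg δ)]

private lemma anti_of_deriv (W g : ℝ → ℝ)
    (hW : ∀ t ≥ (0:ℝ), HasDerivAt W (g t) t)
    (hg : ∀ t ≥ (0:ℝ), g t ≤ 0) :
    AntitoneOn W (Set.Ici 0) := by
  apply antitoneOn_of_deriv_nonpos (convex_Ici 0)
  · exact fun t ht => (hW t ht).continuousAt.continuousWithinAt
  · intro t ht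
    rw [interior_Ici] at ht
    exact ((hW t (le_of_lt ht)).differentiableAt).differentiableWithinAt
  · intro t ht
    rw [interior_Ici] at ht
    rw [(hW t (le_of_lt ht)).deriv]
    exact hg t (le_of_lt ht)

private lemma gronwall_exp (W g : ℝ → ℝ) (κ : ℝ)
    (hW : ∀ t ≥ (0:ℝ), HasDerivAt W (g t) t)
    (hg : ∀ t ≥ (0:ℝ), g t + κ * W t ≤ 0) :
    ∀ t ≥ (0:ℝ), W t * Real.exp (κ * t) ≤ W 0 := by
  have hF : ∀ t ≥ (0:ℝ), HasDerivAt (fun t => W t * Real.exp (κ * t))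
      ((g t + κ * W t) * Real.exp (κ * t)) t := by
    intro t ht
    have hexp : HasDerivAt (fun t : ℝ => Real.exp (κ * t)) (κ * Real.exp (κ * t)) t := by
      have := (Real.hasDerivAt_exp (κ * t)).comp t ((hasDerivAt_id t).const_mul κ)
      simpa [mul_comm, Function.comp_def] using this
    have := (hW t ht).mul hexp
    refine this.congr_deriv ?_
    ring
  have hanti := anti_of_deriv _ _ hF (fun t ht =>
    mul_nonpos_of_nonpos_of_nonneg (hg t ht) (Real.exp_pos _).le)
  intro t ht
  have := hanti (Set.self_mem_Ici) ht ht
  simpa using this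

/-- The Lyapunov function. -/
private noncomputable def lyapV (d e b1 b2 b3 : ℝ) (u1 u2 u3 : ℝ → ℝ) (t : ℝ) : ℝ :=
  d * (u1 t - b1 - b1 * Real.log (u1 t / b1))
    + e * (u2 t - b2 - b2 * Real.log (u2 t / b2))
    + (u3 t - b3 - b3 * Real.log (u3 t / b3))

private lemma lyapV_hasDeriv (a b c d e b1 b2 b3 : ℝ)
    (hb1 : 0 < b1) (hb2 : 0 < b2) (hb3 : 0 < b3)
    (he1 : a * (1 - b1) = b3) (he2 : b * (1 - b2) = b3) (he3 : c * b3 = d * b1 + e * b2)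
    (u1 u2 u3 : ℝ → ℝ)
    (hpos : ∀ t ≥ (0:ℝ), 0 < u1 t ∧ 0 < u2 t ∧ 0 < u3 t)
    (hode : ∀ t ≥ (0:ℝ),
        HasDerivAt u1 (a * u1 t * (1 - u1 t) - u1 t * u3 t) t ∧
        HasDerivAt u2 (b * u2 t * (1 - u2 t) - u2 t * u3 t) t ∧
        HasDerivAt u3 (-(c * (u3 t) ^ 2) + (d * u1 t + e * u2 t) * u3 t) t) :
    ∀ t ≥ (0:ℝ), HasDerivAt (lyapV d e b1 b2 b3 u1 u2 u3)
      (-(a * d * (u1 t - b1)^2 + b * e * (u2 t - b2)^2 + c * (u3 t - b3)^2)) t := by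
  intro t ht
  obtain ⟨h1, h2, h3⟩ := hpos t ht
  obtain ⟨hd1, hd2, hd3⟩ := hode t ht
  have comp : ∀ (β : ℝ) (u : ℝ → ℝ) (D : ℝ), 0 < β → 0 < u t → HasDerivAt u D t →
      HasDerivAt (fun t => u t - β - β * Real.log (u t / β)) ((1 - β / u t) * D) t := by
    intro β u D hβ hu hD
    have hne : u t / β ≠ 0 := by positivity
    have := ((hD.div_const β).log hne).const_mul β
    have := (hD.sub_const β).sub this
    refine this.congr_deriv ?_
    field_simp
  have c1 := comp b1 u1 _ hb1 h1 hd1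
  have c2 := comp b2 u2 _ hb2 h2 hd2
  have c3 := comp b3 u3 _ hb3 h3 hd3
  have htot := ((c1.const_mul d).add (c2.const_mul e)).add c3
  have : HasDerivAt (lyapV d e b1 b2 b3 u1 u2 u3)
      (d * ((1 - b1 / u1 t) * (a * u1 t * (1 - u1 t) - u1 t * u3 t))
        + e * ((1 - b2 / u2 t) * (b * u2 t * (1 - u2 t) - u2 t * u3 t))
        + (1 - b3 / u3 t) * (-(c * (u3 t) ^ 2) + (d * u1 t + e * u2 t) * u3 t)) t := htot
  convert this using 1
  have k1 : (1 - b1 / u1 t) * (a * u1 t * (1 - u1 t) - u1 t * u3 t)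
      = (u1 t - b1) * (a * (1 - u1 t) - u3 t) := by field_simp
  have k2 : (1 - b2 / u2 t) * (b * u2 t * (1 - u2 t) - u2 t * u3 t)
      = (u2 t - b2) * (b * (1 - u2 t) - u3 t) := by field_simp
  have k3 : (1 - b3 / u3 t) * (-(c * (u3 t) ^ 2) + (d * u1 t + e * u2 t) * u3 t)
      = (u3 t - b3) * (-(c * u3 t) + d * u1 t + e * u2 t) := by field_simp; ring
  rw [k1, k2, k3]
  linear_combination (-(d * (u1 t - b1))) * he1 + (-(e * (u2 t - b2))) * he2 + (u3 t - b3) * he3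

private lemma lyapV_anti (a b c d e b1 b2 b3 : ℝ)
    (ha : 0 < a) (hb : 0 < b) (hc : 0 < c) (hd : 0 < d) (he : 0 < e)
    (hb1 : 0 < b1) (hb2 : 0 < b2) (hb3 : 0 < b3)
    (he1 : a * (1 - b1) = b3) (he2 : b * (1 - b2) = b3) (he3 : c * b3 = d * b1 + e * b2)
    (u1 u2 u3 : ℝ → ℝ)
    (hpos : ∀ t ≥ (0:ℝ), 0 < u1 t ∧ 0 < u2 t ∧ 0 < u3 t)
    (hode : ∀ t ≥ (0:ℝ),
        HasDerivAt u1 (a * u1 t * (1 - u1 t) - u1 t * u3 t) t ∧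
        HasDerivAt u2 (b * u2 t * (1 - u2 t) - u2 t * u3 t) t ∧
        HasDerivAt u3 (-(c * (u3 t) ^ 2) + (d * u1 t + e * u2 t) * u3 t) t) :
    AntitoneOn (lyapV d e b1 b2 b3 u1 u2 u3) (Set.Ici 0) := by
  apply anti_of_deriv _
    (fun t => -(a * d * (u1 t - b1)^2 + b * e * (u2 t - b2)^2 + c * (u3 t - b3)^2))
    (lyapV_hasDeriv a b c d e b1 b2 b3 hb1 hb2 hb3 he1 he2 he3 u1 u2 u3 hpos hode)
  intro t ht
  nlinarith [mul_nonneg (mul_nonneg ha.le hd.le) (sq_nonneg (u1 t - b1)),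
    mul_nonneg (mul_nonneg hb.le he.le) (sq_nonneg (u2 t - b2)),
    mul_nonneg hc.le (sq_nonneg (u3 t - b3))]

private lemma conv_lemma (d e b1 b2 b3 ε : ℝ)
    (hd : 0 < d) (he : 0 < e) (hb1 : 0 < b1) (hb2 : 0 < b2) (hb3 : 0 < b3) (hε : 0 < ε) :
    ∃ η > 0, ∀ u1 u2 u3 : ℝ → ℝ, ∀ t : ℝ, 0 < u1 t → 0 < u2 t → 0 < u3 t →
      lyapV d e b1 b2 b3 u1 u2 u3 t < η →
      |u1 t - b1| < ε ∧ |u2 t - b2| < ε ∧ |u3 t - b3| < ε := by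
  set B := Real.sqrt (max b1 (max b2 b3)) with hBdef
  set r := min 1 (ε / (2*B+1)) with hrdef
  have hB : 0 ≤ B := Real.sqrt_nonneg _
  have hr : 0 < r := lt_min one_pos (by positivity)
  refine ⟨min d (min e 1) * r^2, by positivity, ?_⟩
  intro u1 u2 u3 t h1 h2 h3 hW
  have key : ∀ (β s c' : ℝ), 0 < β → 0 < s → 0 < c' → min d (min e 1) ≤ c' →
      c' * (s - β - β * Real.log (s / β)) ≤ lyapV d e b1 b2 b3 u1 u2 u3 t →
      β ≤ max b1 (max b2 b3) → |s - β| < ε := by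
    intro β s c' hβ hs hc' hcm hφW hβB
    have hφ : s - β - β * Real.log (s / β) < r^2 := by
      have hlt : c' * (s - β - β * Real.log (s / β)) < min d (min e 1) * r^2 :=
        lt_of_le_of_lt hφW hW
      have h2' : c' * (s - β - β * Real.log (s / β)) < c' * r^2 :=
        lt_of_lt_of_le hlt (mul_le_mul_of_nonneg_right hcm (sq_nonneg r))
      exact lt_of_mul_lt_mul_left h2' hc'.le
    have hcl := coord_close hβ hs hr hφ
    have hsβ : Real.sqrt β ≤ B := Real.sqrt_le_sqrt hβB
    have hr1 : r ≤ 1 := min_le_left _ _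
    have hr2 : r ≤ ε / (2*B+1) := min_le_right _ _
    have hstep1 : r * (2 * Real.sqrt β + r) ≤ r * (2*B+1) := by nlinarith
    have hstep2 : r * (2*B+1) ≤ ε := by
      have := mul_le_mul_of_nonneg_right hr2 (show (0:ℝ) ≤ 2*B+1 by linarith)
      rwa [div_mul_cancel₀ _ (show (2*B+1) ≠ 0 by positivity)] at this
    linarith
  have hm1 : min d (min e 1) ≤ d := min_le_left _ _
  have hm2 : min d (min e 1) ≤ e := le_trans (min_le_right _ _) (min_le_left _ _)
  have hm3 : min d (min e 1) ≤ 1 := le_trans (min_le_right _ _) (min_le_right _ _)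
  have p1 := phi_nonneg hb1 h1
  have p2 := phi_nonneg hb2 h2
  have p3 := phi_nonneg hb3 h3
  refine ⟨key b1 (u1 t) d hb1 h1 hd hm1 ?_ (le_max_left _ _),
          key b2 (u2 t) e hb2 h2 he hm2 ?_ (le_trans (le_max_left _ _) (le_max_right _ _)),
          key b3 (u3 t) 1 hb3 h3 one_pos hm3 ?_ (le_trans (le_max_right _ _) (le_max_right _ _))⟩
  · unfold lyapV; nlinarith [mul_nonneg he.le p2]
  · unfold lyapV; nlinarith [mul_nonneg hd.le p1]
  · unfold lyapV; nlinarith [mul_nonneg hd.le p1, mul_nonneg he.le p2]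

private lemma init_lemma (d e b1 b2 b3 η : ℝ)
    (hd : 0 < d) (he : 0 < e) (hb1 : 0 < b1) (hb2 : 0 < b2) (hb3 : 0 < b3) (hη : 0 < η) :
    ∃ δ > 0, ∀ u1 u2 u3 : ℝ → ℝ, ∀ t : ℝ,
      |u1 t - b1| < δ → |u2 t - b2| < δ → |u3 t - b3| < δ →
      (0 < u1 t ∧ 0 < u2 t ∧ 0 < u3 t) ∧ lyapV d e b1 b2 b3 u1 u2 u3 t < η := by
  set C := 2*d/b1 + 2*e/b2 + 2/b3 with hCdef
  have hC : 0 < C := by positivity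
  set δ := min (min (b1/2) (min (b2/2) (b3/2))) (min 1 (η/(2*C))) with hδdef
  have hδ : 0 < δ := by
    apply lt_min (lt_min (by positivity) (lt_min (by positivity) (by positivity)))
      (lt_min one_pos (by positivity))
  refine ⟨δ, hδ, ?_⟩
  intro u1 u2 u3 t k1 k2 k3
  have hδ1 : δ ≤ b1/2 := le_trans (min_le_left _ _) (min_le_left _ _)
  have hδ2 : δ ≤ b2/2 := le_trans (min_le_left _ _) (le_trans (min_le_right _ _) (min_le_left _ _))
  have hδ3 : δ ≤ b3/2 := le_trans (min_le_left _ _) (le_trans (min_le_right _ _) (min_le_right _ _))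
  have hδ4 : δ ≤ 1 := le_trans (min_le_right _ _) (min_le_left _ _)
  have hδ5 : δ ≤ η/(2*C) := le_trans (min_le_right _ _) (min_le_right _ _)
  obtain ⟨hs1, hφ1⟩ := coord_init hb1 hδ1 k1
  obtain ⟨hs2, hφ2⟩ := coord_init hb2 hδ2 k2
  obtain ⟨hs3, hφ3⟩ := coord_init hb3 hδ3 k3
  refine ⟨⟨hs1, hs2, hs3⟩, ?_⟩
  have hsum : lyapV d e b1 b2 b3 u1 u2 u3 t ≤ C * δ^2 := by
    have t1 := mul_le_mul_of_nonneg_left hφ1 hd.le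
    have t2 := mul_le_mul_of_nonneg_left hφ2 he.le
    have heq : d * (2*δ^2/b1) + e * (2*δ^2/b2) + 2*δ^2/b3 = C * δ^2 := by
      rw [hCdef]; field_simp
    unfold lyapV
    linarith [t1, t2, hφ3]
  have h2 : C * δ^2 ≤ C * δ := by nlinarith [mul_nonneg (mul_nonneg hC.le hδ.le) (show (0:ℝ) ≤ 1 - δ by linarith)]
  have h3 : C * δ ≤ η/2 := by
    have := mul_le_mul_of_nonneg_left hδ5 hC.le
    calc C * δ ≤ C * (η/(2*C)) := this
      _ = η/2 := by field_simp
  have h4 : η/2 < η := by linarith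
  exact lt_of_le_of_lt (hsum.trans (h2.trans h3)) h4

set_option maxHeartbeats 1000000 in
/-- The positive equilibrium of the kinetic two-prey one-predator system is
Lyapunov stable, indeed asymptotically stable, on the open positive octant. -/
theorem stmt7 (a b c d e : ℝ) (ha : 0 < a) (hb : 0 < b) (hc : 0 < c)
    (hd : 0 < d) (he : 0 < e)
    (h : a * b * c > max (e * (b - a)) (d * (a - b))) :
    let b1 := (a * b * c + a * e - b * e) / (a * b * c + b * d + a * e)
    let b2 := (a * b * c + b * d - a * d) / (a * b * c + b * d + a * e)
    let b3 := a * b * (d + e) / (a * b * c + b * d + a * e)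
    -- Lyapunov stability
    (∀ ε > 0, ∃ δ > 0, ∀ u1 u2 u3 : ℝ → ℝ,
      (∀ t ≥ (0 : ℝ), 0 < u1 t ∧ 0 < u2 t ∧ 0 < u3 t) →
      (∀ t ≥ (0 : ℝ),
        HasDerivAt u1 (a * u1 t * (1 - u1 t) - u1 t * u3 t) t ∧
        HasDerivAt u2 (b * u2 t * (1 - u2 t) - u2 t * u3 t) t ∧
        HasDerivAt u3 (-(c * (u3 t) ^ 2) + (d * u1 t + e * u2 t) * u3 t) t) →
      |u1 0 - b1| < δ → |u2 0 - b2| < δ → |u3 0 - b3| < δ →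
      ∀ t ≥ (0 : ℝ), |u1 t - b1| < ε ∧ |u2 t - b2| < ε ∧ |u3 t - b3| < ε) ∧
    -- local attraction
    (∃ δ₀ > (0 : ℝ), ∀ u1 u2 u3 : ℝ → ℝ,
      (∀ t ≥ (0 : ℝ), 0 < u1 t ∧ 0 < u2 t ∧ 0 < u3 t) →
      (∀ t ≥ (0 : ℝ),
        HasDerivAt u1 (a * u1 t * (1 - u1 t) - u1 t * u3 t) t ∧
        HasDerivAt u2 (b * u2 t * (1 - u2 t) - u2 t * u3 t) t ∧
        HasDerivAt u3 (-(c * (u3 t) ^ 2) + (d * u1 t + e * u2 t) * u3 t) t) →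
      |u1 0 - b1| < δ₀ → |u2 0 - b2| < δ₀ → |u3 0 - b3| < δ₀ →
      Filter.Tendsto u1 Filter.atTop (nhds b1) ∧
      Filter.Tendsto u2 Filter.atTop (nhds b2) ∧
      Filter.Tendsto u3 Filter.atTop (nhds b3)) := by
  intro b1 b2 b3
  have hb1e : b1 = (a * b * c + a * e - b * e) / (a * b * c + b * d + a * e) := rfl
  have hb2e : b2 = (a * b * c + b * d - a * d) / (a * b * c + b * d + a * e) := rfl
  have hb3e : b3 = a * b * (d + e) / (a * b * c + b * d + a * e) := rfl
  have hD : 0 < a * b * c + b * d + a * e := by positivity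
  have hn1 : 0 < a * b * c + a * e - b * e := by
    have := lt_of_le_of_lt (le_max_left (e * (b - a)) (d * (a - b))) h
    nlinarith
  have hn2 : 0 < a * b * c + b * d - a * d := by
    have := lt_of_le_of_lt (le_max_right (e * (b - a)) (d * (a - b))) h
    nlinarith
  have hb1 : 0 < b1 := hb1e ▸ div_pos hn1 hD
  have hb2 : 0 < b2 := hb2e ▸ div_pos hn2 hD
  have hb3 : 0 < b3 := hb3e ▸ div_pos (by positivity) hD
  have he1 : a * (1 - b1) = b3 := by rw [hb1e, hb3e]; field_simp; ring
  have he2 : b * (1 - b2) = b3 := by rw [hb2e, hb3e]; field_simp; ring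
  have he3 : c * b3 = d * b1 + e * b2 := by rw [hb1e, hb2e, hb3e]; field_simp; ring
  constructor
  · -- Lyapunov stability
    intro ε hε
    obtain ⟨η, hη, hconv⟩ := conv_lemma d e b1 b2 b3 ε hd he hb1 hb2 hb3 hε
    obtain ⟨δ, hδ, hinit⟩ := init_lemma d e b1 b2 b3 η hd he hb1 hb2 hb3 hη
    refine ⟨δ, hδ, ?_⟩
    intro u1 u2 u3 hpos hode k1 k2 k3 t ht
    obtain ⟨_, hW0⟩ := hinit u1 u2 u3 0 k1 k2 k3
    have hanti := lyapV_anti a b c d e b1 b2 b3 ha hb hc hd he hb1 hb2 hb3 he1 he2 he3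
      u1 u2 u3 hpos hode
    have hWt : lyapV d e b1 b2 b3 u1 u2 u3 t < η :=
      lt_of_le_of_lt (hanti Set.self_mem_Ici ht ht) hW0
    obtain ⟨h1, h2, h3⟩ := hpos t ht
    exact hconv u1 u2 u3 t h1 h2 h3 hWt
  · -- attraction
    obtain ⟨η₀, hη₀, hη₀1, hη₀2, hη₀3⟩ :
        ∃ η₀, 0 < η₀ ∧ η₀ ≤ d * b1 / 4 ∧ η₀ ≤ e * b2 / 4 ∧ η₀ ≤ b3 / 4 := by
      refine ⟨min (d * b1) (min (e * b2) b3) / 4,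
        div_pos (lt_min (by positivity) (lt_min (by positivity) hb3)) (by norm_num), ?_, ?_, ?_⟩
      · exact div_le_div_of_nonneg_right (min_le_left _ _) (by norm_num)
      · exact div_le_div_of_nonneg_right (le_trans (min_le_right _ _) (min_le_left _ _)) (by norm_num)
      · exact div_le_div_of_nonneg_right (le_trans (min_le_right _ _) (min_le_right _ _)) (by norm_num)
    obtain ⟨δ₀, hδ₀, hinit⟩ := init_lemma d e b1 b2 b3 η₀ hd he hb1 hb2 hb3 hη₀
    refine ⟨δ₀, hδ₀, ?_⟩
    intro u1 u2 u3 hpos hode k1 k2 k3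
    obtain ⟨_, hW0⟩ := hinit u1 u2 u3 0 k1 k2 k3
    have hanti := lyapV_anti a b c d e b1 b2 b3 ha hb hc hd he hb1 hb2 hb3 he1 he2 he3
      u1 u2 u3 hpos hode
    have htrap : ∀ t ≥ (0:ℝ), lyapV d e b1 b2 b3 u1 u2 u3 t < η₀ := fun t ht =>
      lt_of_le_of_lt (hanti Set.self_mem_Ici ht ht) hW0
    -- lower bounds on trajectories
    have hlow : ∀ t ≥ (0:ℝ), b1/4 ≤ u1 t ∧ b2/4 ≤ u2 t ∧ b3/4 ≤ u3 t := by
      intro t ht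
      obtain ⟨h1, h2, h3⟩ := hpos t ht
      have hWt := htrap t ht
      unfold lyapV at hWt
      have p1 := phi_nonneg hb1 h1
      have p2 := phi_nonneg hb2 h2
      have p3 := phi_nonneg hb3 h3
      have q1 := mul_nonneg hd.le p1
      have q2 := mul_nonneg he.le p2
      refine ⟨coord_lower hb1 h1 ?_, coord_lower hb2 h2 ?_, coord_lower hb3 h3 ?_⟩
      · have hdφ : d * (u1 t - b1 - b1 * Real.log (u1 t / b1)) ≤ d * (b1 / 4) := by
          linarith
        exact le_of_mul_le_mul_left hdφ hd
      · have hdφ : e * (u2 t - b2 - b2 * Real.log (u2 t / b2)) ≤ e * (b2 / 4) := by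
          linarith
        exact le_of_mul_le_mul_left hdφ he
      · linarith
    -- Gronwall
    obtain ⟨κ, hκ, hκ1, hκ2, hκ3⟩ :
        ∃ κ, 0 < κ ∧ κ ≤ a * b1 / 4 ∧ κ ≤ b * b2 / 4 ∧ κ ≤ c * b3 / 4 := by
      refine ⟨min (a * b1) (min (b * b2) (c * b3)) / 4,
        div_pos (lt_min (by positivity) (lt_min (by positivity) (by positivity))) (by norm_num),
        ?_, ?_, ?_⟩
      · exact div_le_div_of_nonneg_right (min_le_left _ _) (by norm_num)
      · exact div_le_div_of_nonneg_right (le_trans (min_le_right _ _) (min_le_left _ _)) (by norm_num)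
      · exact div_le_div_of_nonneg_right (le_trans (min_le_right _ _) (min_le_right _ _)) (by norm_num)
    have hWderiv := lyapV_hasDeriv a b c d e b1 b2 b3 hb1 hb2 hb3 he1 he2 he3 u1 u2 u3 hpos hode
    have hterm : ∀ (co m s q : ℝ), 0 < m → 0 ≤ co → 0 ≤ q → m/4 ≤ s → κ ≤ co*m/4 →
        κ * (q/s) ≤ co * q := by
      intro co m s q hm hco hq hms hκco
      have hs : 0 < s := lt_of_lt_of_le (by linarith) hms
      rw [mul_div_assoc', div_le_iff₀ hs]
      nlinarith [mul_nonneg (mul_nonneg hco hq) (show (0:ℝ) ≤ s - m/4 by linarith),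
        mul_le_mul_of_nonneg_right hκco hq]
    have hgr : ∀ t ≥ (0:ℝ),
        -(a * d * (u1 t - b1)^2 + b * e * (u2 t - b2)^2 + c * (u3 t - b3)^2)
          + κ * lyapV d e b1 b2 b3 u1 u2 u3 t ≤ 0 := by
      intro t ht
      obtain ⟨h1, h2, h3⟩ := hpos t ht
      obtain ⟨l1, l2, l3⟩ := hlow t ht
      have hub : lyapV d e b1 b2 b3 u1 u2 u3 t
          ≤ d * ((u1 t - b1)^2 / u1 t) + e * ((u2 t - b2)^2 / u2 t) + (u3 t - b3)^2 / u3 t := by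
        unfold lyapV
        have t1 := mul_le_mul_of_nonneg_left (phi_ub hb1 h1) hd.le
        have t2 := mul_le_mul_of_nonneg_left (phi_ub hb2 h2) he.le
        have t3 := phi_ub hb3 h3
        linarith
      have g1 : κ * ((u1 t - b1)^2 / u1 t) ≤ a * (u1 t - b1)^2 :=
        hterm a b1 (u1 t) ((u1 t - b1)^2) hb1 ha.le (sq_nonneg _) l1 hκ1
      have g2 : κ * ((u2 t - b2)^2 / u2 t) ≤ b * (u2 t - b2)^2 :=
        hterm b b2 (u2 t) ((u2 t - b2)^2) hb2 hb.le (sq_nonneg _) l2 hκ2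
      have g3 : κ * ((u3 t - b3)^2 / u3 t) ≤ c * (u3 t - b3)^2 :=
        hterm c b3 (u3 t) ((u3 t - b3)^2) hb3 hc.le (sq_nonneg _) l3 hκ3
      have hκW : κ * lyapV d e b1 b2 b3 u1 u2 u3 t
          ≤ κ * (d * ((u1 t - b1)^2 / u1 t) + e * ((u2 t - b2)^2 / u2 t) + (u3 t - b3)^2 / u3 t) :=
        mul_le_mul_of_nonneg_left hub hκ.le
      have gd1 := mul_le_mul_of_nonneg_left g1 hd.le
      have gd2 := mul_le_mul_of_nonneg_left g2 he.le
      unfold lyapV at hκW ⊢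
      linarith [hκW, gd1, gd2, g3]
    have hdecay := gronwall_exp _ _ κ hWderiv hgr
    have hWnonneg : ∀ t ≥ (0:ℝ), 0 ≤ lyapV d e b1 b2 b3 u1 u2 u3 t := by
      intro t ht
      obtain ⟨h1, h2, h3⟩ := hpos t ht
      unfold lyapV
      have p1 := phi_nonneg hb1 h1
      have p2 := phi_nonneg hb2 h2
      have p3 := phi_nonneg hb3 h3
      nlinarith [mul_nonneg hd.le p1, mul_nonneg he.le p2]
    -- W tends to 0
    have hWto : Filter.Tendsto (lyapV d e b1 b2 b3 u1 u2 u3) Filter.atTop (nhds 0) := by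
      have hexp : Filter.Tendsto (fun t : ℝ => lyapV d e b1 b2 b3 u1 u2 u3 0 * Real.exp (-(κ * t)))
          Filter.atTop (nhds 0) := by
        have h1 : Filter.Tendsto (fun t : ℝ => κ * t) Filter.atTop Filter.atTop :=
          Filter.Tendsto.const_mul_atTop hκ tendsto_id
        have h2 : Filter.Tendsto (fun t : ℝ => Real.exp (-(κ * t))) Filter.atTop (nhds 0) :=
          Real.tendsto_exp_neg_atTop_nhds_zero.comp h1
        simpa using h2.const_mul (lyapV d e b1 b2 b3 u1 u2 u3 0)
      apply squeeze_zero' (Filter.eventually_atTop.2 ⟨0, hWnonneg⟩) _ hexp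
      apply Filter.eventually_atTop.2 ⟨0, ?_⟩
      intro t ht
      have hdt := hdecay t ht
      rw [Real.exp_neg, ← div_eq_mul_inv, le_div_iff₀ (Real.exp_pos _)]
      exact hdt
    refine ⟨?_, ?_, ?_⟩ <;>
    · rw [Metric.tendsto_nhds]
      intro ε hε
      obtain ⟨η, hη, hconv⟩ := conv_lemma d e b1 b2 b3 ε hd he hb1 hb2 hb3 hε
      have hev : ∀ᶠ t in Filter.atTop, lyapV d e b1 b2 b3 u1 u2 u3 t < η :=
        hWto.eventually_lt_const hη
      filter_upwards [hev, Filter.eventually_ge_atTop (0:ℝ)] with t hWt ht0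
      obtain ⟨h1, h2, h3⟩ := hpos t ht0
      have := hconv u1 u2 u3 t h1 h2 h3 hWt
      rw [Real.dist_eq]
      first
      | exact this.1
      | exact this.2.1
      | exact this.2.2
end

section
/- The Jacobian matrix G = [[-aū₁, 0, -ū₁], [0, -bū₂, -ū₂], [dū₃, eū₃, -cū₃]] of the kinetic system at the positive equilibrium ū has all eigenvalues with strictly negative real part. -/
open Matrix Polynomial
theorem stmt8 (a b c d e b1 b2 b3 : ℝ) (ha : 0 < a) (hb : 0 < b) (hc : 0 < c)
    (hd : 0 < d) (he : 0 < e) (hb1 : 0 < b1) (hb2 : 0 < b2) (hb3 : 0 < b3) :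
    let G : Matrix (Fin 3) (Fin 3) ℝ :=
      !![-(a * b1), 0, -b1; 0, -(b * b2), -b2; d * b3, e * b3, -(c * b3)]
    ∀ z : ℂ, (G.map (Complex.ofReal ·)).charpoly.IsRoot z → z.re < 0 := by
  intro G z hz
  rw [Matrix.charpoly, Polynomial.IsRoot, Matrix.det_fin_three] at hz
  simp only [charmatrix_apply, G, Matrix.map_apply, Matrix.diagonal_apply,
    Matrix.cons_val', Matrix.cons_val_zero, Matrix.cons_val_one, Matrix.head_cons,
    Matrix.empty_val', Matrix.cons_val_fin_one, Matrix.head_fin_const, Matrix.cons_val_two,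
    Matrix.tail_cons, if_true, if_false, eval_sub, eval_mul, eval_add, eval_X, eval_C,
    eval_neg, Fin.isValue, reduceIte] at hz
  norm_num [Matrix.cons_val_zero, Matrix.cons_val_one, Matrix.head_cons, Fin.ext_iff, Matrix.cons_val_two, Matrix.tail_cons, Matrix.vecHead] at hz
  clear_value G
  clear G
  obtain ⟨x, y⟩ := z
  rw [Complex.ext_iff] at hz
  simp only [Complex.add_re, Complex.add_im, Complex.mul_re, Complex.mul_im,
    Complex.ofReal_re, Complex.ofReal_im, Complex.zero_re, Complex.zero_im] at hz
  obtain ⟨h1, h2⟩ := hz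
  show x < 0
  by_contra hx
  push_neg at hx
  set A := a * b1 with hA
  set B := b * b2 with hB
  set C := c * b3 with hC
  have hA0 : 0 < A := mul_pos ha hb1
  have hB0 : 0 < B := mul_pos hb hb2
  have hC0 : 0 < C := mul_pos hc hb3
  have hP0 : 0 < d * b1 * b3 := mul_pos (mul_pos hd hb1) hb3
  have hQ0 : 0 < e * b2 * b3 := mul_pos (mul_pos he hb2) hb3
  set P := d * b1 * b3 with hP
  set Q := e * b2 * b3 with hQ
  set A2 := A + B + C with hA2
  set A1 := A*B + A*C + B*C + P + Q with hA1
  set A0 := A*B*C + A*Q + B*P with hA0'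
  have hre : x^3 - 3*x*y^2 + A2*(x^2 - y^2) + A1*x + A0 = 0 := by
    linear_combination h1
  have him : y * (3*x^2 - y^2 + 2*A2*x + A1) = 0 := by
    linear_combination h2
  have hRH : 0 < A2 * A1 - A0 := by
    have : A2 * A1 - A0 = A^2*B + A^2*C + A*B^2 + B^2*C + A*C^2 + B*C^2 + 2*A*B*C
        + A*P + B*Q + C*P + C*Q := by ring
    rw [this]
    positivity
  have hA00 : 0 < A0 := by positivity
  have hA20 : 0 < A2 := by positivity
  have hA10 : 0 < A1 := by positivity
  rcases mul_eq_zero.mp him with hy | key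
  · subst hy
    nlinarith [pow_nonneg hx 3, mul_nonneg (mul_nonneg hA20.le hx) hx,
      mul_nonneg hA10.le hx]
  · have hkey2 : 8*x^3 + 8*A2*x^2 + 2*(A1 + A2^2)*x + (A2*A1 - A0) = 0 := by
      linear_combination -hre + (3*x + A2) * key
    have t1 : 0 ≤ 8*x^3 := by positivity
    have t2 : 0 ≤ 8*A2*x^2 := by positivity
    have t3 : 0 ≤ 2*(A1 + A2^2)*x := mul_nonneg (by positivity) hx
    linarith
end

section
/- For the characteristic polynomial λ³ + A₂λ² + A₁λ + A₀ of -G where G = [[-aū₁, 0, -ū₁], [0, -bū₂, -ū₂], [dū₃, eū₃, -cū₃]], one has A₂ = aū₁+bū₂+cū₃ > 0, A₁ = abū₁ū₂ + acū₁ū₃ + dū₁ū₃ + bcū₂ū₃ + eū₂ū₃ > 0, A₀ = (abc+ae+bd)ū₁ū₂ū₃ > 0, and A₂A₁ - A₀ > 0. -/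
theorem stmt9 (a b c d e b1 b2 b3 : ℝ) (ha : 0 < a) (hb : 0 < b) (hc : 0 < c)
    (hd : 0 < d) (he : 0 < e) (hb1 : 0 < b1) (hb2 : 0 < b2) (hb3 : 0 < b3) :
    let G : Matrix (Fin 3) (Fin 3) ℝ :=
      !![-(a * b1), 0, -b1; 0, -(b * b2), -b2; d * b3, e * b3, -(c * b3)]
    let A2 := a * b1 + b * b2 + c * b3
    let A1 := a * b * b1 * b2 + a * c * b1 * b3 + d * b1 * b3
      + b * c * b2 * b3 + e * b2 * b3
    let A0 := (a * b * c + a * e + b * d) * (b1 * b2 * b3)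
    (∀ x : ℝ, Matrix.det (x • (1 : Matrix (Fin 3) (Fin 3) ℝ) - G)
        = x ^ 3 + A2 * x ^ 2 + A1 * x + A0) ∧
    0 < A2 ∧ 0 < A1 ∧ 0 < A0 ∧ 0 < A2 * A1 - A0 := by
  intro G A2 A1 A0
  refine ⟨fun x => ?_, by positivity, by positivity, by positivity, ?_⟩
  · simp [G, Matrix.det_fin_three, Matrix.one_apply, A2, A1, A0]
    ring
  · have h : A2 * A1 - A0 =
      a^2*b*b1^2*b2 + a^2*c*b1^2*b3 + a*d*b1^2*b3
      + a*b^2*b1*b2^2 + b^2*c*b2^2*b3 + b*e*b2^2*b3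
      + a*c^2*b1*b3^2 + c*d*b1*b3^2 + b*c^2*b2*b3^2 + c*e*b2*b3^2
      + 2*(a*b*c*(b1*b2*b3)) := by simp only [A2, A1, A0]; ring
    rw [h]; positivity
end

section
/- Let μ ≥ 0 and let M(μ) = -μK + G, where K = diag(k₁₁, k₂₂, k₃₃) with k₁₁, k₂₂, k₃₃ > 0 and G = [[-aū₁, 0, -ū₁], [0, -bū₂, -ū₂], [dū₃, eū₃, -cū₃]] with a,b,c,d,e,ū₁,ū₂,ū₃ > 0. Then every eigenvalue of M(μ) has strictly negative real part. -/
open Polynomial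

lemma cubic_hurwitz (p q r : ℝ) (hp : 0 < p) (hq : 0 < q) (hr : 0 < r)
    (hpq : r < p * q) (z : ℂ)
    (hz : z ^ 3 + (p : ℂ) * z ^ 2 + (q : ℂ) * z + (r : ℂ) = 0) : z.re < 0 := by
  obtain ⟨x, y⟩ := z
  simp only [Complex.ext_iff] at hz
  have hre := hz.1
  have him := hz.2
  simp [pow_succ, Complex.add_re, Complex.add_im, Complex.mul_re,
    Complex.mul_im, Complex.ofReal_re, Complex.ofReal_im] at hre him
  show x < 0
  by_contra hx0
  push_neg at hx0
  rcases eq_or_ne y 0 with h0 | h0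
  · rw [h0] at hre
    nlinarith [pow_nonneg hx0 3, sq_nonneg x, mul_nonneg hx0 hx0]
  · have hy2 : y ^ 2 = 3 * x ^ 2 + 2 * p * x + q := by
      have key : y * (3 * x ^ 2 - y ^ 2 + 2 * p * x + q) = 0 := by linear_combination him
      rcases mul_eq_zero.mp key with h | h
      · exact absurd h h0
      · linarith
    have key : 8 * x ^ 3 + 8 * p * x ^ 2 + 2 * q * x + 2 * p ^ 2 * x + p * q - r = 0 := by
      linear_combination -hre + (-3 * x - p) * hy2
    nlinarith [pow_nonneg hx0 3, mul_nonneg hx0 hx0, mul_nonneg hp.le (mul_nonneg hx0 hx0),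
      mul_nonneg hq.le hx0, mul_nonneg (mul_nonneg hp.le hp.le) hx0]

set_option maxHeartbeats 1600000 in
theorem stmt10 (a b c d e b1 b2 b3 k11 k22 k33 : ℝ)
    (ha : 0 < a) (hb : 0 < b) (hc : 0 < c) (hd : 0 < d) (he : 0 < e)
    (hb1 : 0 < b1) (hb2 : 0 < b2) (hb3 : 0 < b3)
    (hk11 : 0 < k11) (hk22 : 0 < k22) (hk33 : 0 < k33)
    (μ : ℝ) (hμ : 0 ≤ μ) :
    let K : Matrix (Fin 3) (Fin 3) ℝ := Matrix.diagonal ![k11, k22, k33]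
    let G : Matrix (Fin 3) (Fin 3) ℝ :=
      !![-(a * b1), 0, -b1; 0, -(b * b2), -b2; d * b3, e * b3, -(c * b3)]
    let M : Matrix (Fin 3) (Fin 3) ℝ := -(μ • K) + G
    ∀ z : ℂ, (M.map (Complex.ofReal ·)).charpoly.IsRoot z → z.re < 0 := by
  intro K G M z hz
  have hz' : Polynomial.eval z ((M.map (Complex.ofReal ·)).charpoly) = 0 := hz
  set α := μ * k11 + a * b1 with hα
  set β := μ * k22 + b * b2 with hβ
  set γ := μ * k33 + c * b3 with hγ
  have hαp : 0 < α := by positivity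
  have hβp : 0 < β := by positivity
  have hγp : 0 < γ := by positivity
  rw [Matrix.charpoly, Matrix.det_fin_three] at hz'
  simp only [Matrix.charmatrix_apply, Matrix.diagonal_apply, Fin.isValue,
    Matrix.map_apply, M, G, K, Matrix.add_apply, Matrix.neg_apply, Matrix.smul_apply,
    Matrix.diagonal_apply, Matrix.cons_val', Matrix.cons_val_zero, Matrix.cons_val_one,
    Matrix.head_cons, Matrix.cons_val_fin_one, Matrix.empty_val',
    Matrix.head_fin_const, Matrix.of_apply, smul_eq_mul,
    Polynomial.eval_sub, Polynomial.eval_add, Polynomial.eval_mul, Polynomial.eval_neg,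
    Polynomial.eval_X, Polynomial.eval_C] at hz'
  norm_num [Fin.ext_iff] at hz'
  set p := α + β + γ with hp
  set q := α * β + α * γ + β * γ + e * b2 * b3 + d * b1 * b3 with hq
  set r := α * β * γ + e * b2 * b3 * α + d * b1 * b3 * β with hr
  have heq : z ^ 3 + (p : ℂ) * z ^ 2 + (q : ℂ) * z + (r : ℂ) = 0 := by
    rw [← hz', hp, hq, hr, hα, hβ, hγ]
    push_cast
    ring
  refine cubic_hurwitz p q r (by positivity) (by positivity) (by positivity) ?_ z heq
  rw [hp, hq, hr]
  nlinarith [mul_pos hαp hβp, mul_pos hαp hγp, mul_pos hβp hγp,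
    mul_pos (mul_pos hαp hαp) hβp, mul_pos (mul_pos hαp hαp) hγp,
    mul_pos (mul_pos hβp hβp) hαp, mul_pos (mul_pos hβp hβp) hγp,
    mul_pos (mul_pos hγp hγp) hαp, mul_pos (mul_pos hγp hγp) hβp,
    mul_pos (mul_pos hαp hβp) hγp,
    mul_pos (mul_pos (mul_pos he hb2) hb3) hβp,
    mul_pos (mul_pos (mul_pos he hb2) hb3) hγp,
    mul_pos (mul_pos (mul_pos hd hb1) hb3) hαp,
    mul_pos (mul_pos (mul_pos hd hb1) hb3) hγp]
end

section
/- With K = diag(k₁₁, k₂₂, k₃₃), k_ii > 0, and G as the Jacobian at the positive equilibrium, the coefficients of the characteristic polynomial det(λI + μK - G) = λ³ + A₂λ² + A₁λ + A₀ satisfy A₂ > 0, A₁ > 0, A₀ > 0 for every μ ≥ 0; explicitly A₀ = k₁₁k₂₂k₃₃μ³ + (k₁₁k₂₂cū₃ + k₁₁k₃₃bū₂ + k₂₂k₃₃aū₁)μ² + (abk₃₃ū₁ū₂ + dk₂₂ū₁ū₃ + ack₂₂ū₁ū₃ + bck₁₁ū₂ū₃ + ek₁₁ū₂ū₃)μ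 + (ae+bd+abc)ū₁ū₂ū₃. -/
theorem stmt11 (a b c d e b1 b2 b3 k11 k22 k33 : ℝ)
    (ha : 0 < a) (hb : 0 < b) (hc : 0 < c) (hd : 0 < d) (he : 0 < e)
    (hb1 : 0 < b1) (hb2 : 0 < b2) (hb3 : 0 < b3)
    (hk11 : 0 < k11) (hk22 : 0 < k22) (hk33 : 0 < k33) :
    let K : Matrix (Fin 3) (Fin 3) ℝ := Matrix.diagonal ![k11, k22, k33]
    let G : Matrix (Fin 3) (Fin 3) ℝ :=
      !![-(a * b1), 0, -b1; 0, -(b * b2), -b2; d * b3, e * b3, -(c * b3)]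
    ∀ μ : ℝ, 0 ≤ μ → ∃ A2 A1 A0 : ℝ,
      (∀ x : ℝ, Matrix.det (x • (1 : Matrix (Fin 3) (Fin 3) ℝ) + μ • K - G)
          = x ^ 3 + A2 * x ^ 2 + A1 * x + A0) ∧
      0 < A2 ∧ 0 < A1 ∧ 0 < A0 ∧
      A0 = k11 * k22 * k33 * μ ^ 3
        + (k11 * k22 * (c * b3) + k11 * k33 * (b * b2) + k22 * k33 * (a * b1)) * μ ^ 2
        + (a * b * k33 * b1 * b2 + d * k22 * b1 * b3 + a * c * k22 * b1 * b3
            + b * c * k11 * b2 * b3 + e * k11 * b2 * b3) * μ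
        + (a * e + b * d + a * b * c) * (b1 * b2 * b3) := by
  intro K G μ hμ
  set p := μ * k11 + a * b1 with hp
  set q := μ * k22 + b * b2 with hq
  set r := μ * k33 + c * b3 with hr
  have hpp : 0 < p := by positivity
  have hqq : 0 < q := by positivity
  have hrr : 0 < r := by positivity
  refine ⟨p + q + r, p*q + p*r + q*r + e*b2*b3 + d*b1*b3,
    p*q*r + p*(e*b2*b3) + q*(d*b1*b3), ?_, by positivity, by positivity, by positivity, ?_⟩
  · intro x
    simp only [K, G, Matrix.det_fin_three, Matrix.sub_apply, Matrix.add_apply,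
      Matrix.smul_apply, Matrix.one_apply, Matrix.diagonal_apply, Matrix.cons_val',
      Matrix.cons_val_zero, Matrix.cons_val_one, Matrix.head_cons, Matrix.head_fin_const,
      Matrix.empty_val', Matrix.cons_val_fin_one, Matrix.cons_val_two, Matrix.tail_cons,
      Fin.isValue, smul_eq_mul, if_true, if_false]
    norm_num [Fin.ext_iff]
    simp only [Matrix.cons_val_two, Matrix.vecHead, Matrix.vecTail, Function.comp, Fin.succ, hp, hq, hr]
    norm_num
    ring
  · simp only [hp, hq, hr]; ring
end

section
/- Let M(μ) = -μK_u + G_u where K_u = [[k₁₁+k₁₃ū₃, 0, k₁₃ū₁],[0, k₂₂+k₂₃ū₃, k₂₃ū₂],[k₃₁ū₃, k₃₂ū₃, k₃₃+k₃₁ū₁+k₃₂ū₂]] and G_u = [[-aū₁,0,-ū₁],[0,-bū₂,-ū₂],[dū₃,eū₃,-cū₃]]. If k₃₁ = k₃₂ = 0 (but k₁₃, k₂₃ ≥ 0 arbitrary), then for every μ ≥ 0 all eigenvalues of M(μ) have strictly negative real part. -/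
theorem cubicRH (A2 A1 A0 : ℝ) (h2 : 0 < A2) (h1 : 0 < A1) (h0 : 0 < A0)
    (hRH : A0 < A2 * A1) (z : ℂ)
    (hz : z^3 + (A2:ℂ)*z^2 + (A1:ℂ)*z + (A0:ℂ) = 0) : z.re < 0 := by
  by_contra hcon
  push_neg at hcon
  have hre := congrArg Complex.re hz
  have him := congrArg Complex.im hz
  simp only [Complex.add_re, Complex.add_im, Complex.mul_re, Complex.mul_im,
    Complex.ofReal_re, Complex.ofReal_im, pow_succ, pow_zero, one_mul,
    Complex.one_re, Complex.one_im, Complex.zero_re, Complex.zero_im,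
    zero_mul, mul_zero, zero_sub, sub_zero, zero_add, add_zero] at hre him
  set x := z.re with hx
  set y := z.im with hy
  have hre' : x^3 - 3*x*y^2 + A2*(x^2-y^2) + A1*x + A0 = 0 := by linear_combination hre
  have key : y * (3*x^2 - y^2 + 2*A2*x + A1) = 0 := by linear_combination him
  rcases mul_eq_zero.mp key with hy0 | hfac
  · have h3 : x^3 + A2*x^2 + A1*x + A0 = 0 := by
      linear_combination hre' + (3*x + A2)*y*hy0
    nlinarith [pow_nonneg hcon 3, mul_nonneg (mul_nonneg h2.le hcon) hcon,
      mul_nonneg h1.le hcon]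
  · have hy2 : y^2 = 3*x^2 + 2*A2*x + A1 := by linarith
    have hfinal : 8*x^3 + 8*A2*x^2 + (2*A1 + 2*A2^2)*x + (A2*A1 - A0) = 0 := by
      linear_combination -hre' - (3*x + A2)*hy2
    nlinarith [pow_nonneg hcon 3, mul_nonneg (mul_nonneg h2.le hcon) hcon,
      mul_nonneg h1.le hcon, mul_nonneg (mul_nonneg h2.le h2.le) hcon]
set_option maxHeartbeats 1000000 in
theorem stmt19 (a b c d e b1 b2 b3 k11 k22 k33 k13 k23 k31 k32 : ℝ)
    (ha : 0 < a) (hb : 0 < b) (hc : 0 < c) (hd : 0 < d) (he : 0 < e)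
    (hb1 : 0 < b1) (hb2 : 0 < b2) (hb3 : 0 < b3)
    (hk11 : 0 < k11) (hk22 : 0 < k22) (hk33 : 0 < k33)
    (hk13 : 0 ≤ k13) (hk23 : 0 ≤ k23)
    (hk31 : k31 = 0) (hk32 : k32 = 0) :
    let Ku : Matrix (Fin 3) (Fin 3) ℝ :=
      !![k11 + k13 * b3, 0, k13 * b1;
         0, k22 + k23 * b3, k23 * b2;
         k31 * b3, k32 * b3, k33 + k31 * b1 + k32 * b2]
    let Gu : Matrix (Fin 3) (Fin 3) ℝ :=
      !![-(a * b1), 0, -b1; 0, -(b * b2), -b2; d * b3, e * b3, -(c * b3)]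
    ∀ μ : ℝ, 0 ≤ μ →
      ∀ z : ℂ, ((-(μ • Ku) + Gu).map (Complex.ofReal ·)).charpoly.IsRoot z →
        z.re < 0 := by
  subst hk31 hk32
  intro Ku Gu μ hμ z hroot
  have hz : Polynomial.eval z ((-(μ • Ku) + Gu).map (Complex.ofReal ·)).charpoly = 0 := hroot
  rw [Matrix.charpoly, Matrix.det_fin_three] at hz
  simp only [Ku, Gu, Matrix.charmatrix_apply, Matrix.diagonal_apply, if_true, if_false,
    Matrix.map_apply, Matrix.add_apply, Matrix.neg_apply, Matrix.smul_apply,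
    Matrix.cons_val', Matrix.cons_val_zero, Matrix.cons_val_one, Matrix.head_cons,
    Matrix.empty_val', Matrix.cons_val_fin_one, Matrix.head_fin_const, Matrix.of_apply,
    Matrix.cons_val_two, Matrix.tail_cons, Polynomial.eval_zero, zero_mul, mul_zero,
    neg_zero, add_zero, zero_add, sub_zero,
    smul_eq_mul, Fin.isValue, one_ne_zero, Fin.reduceEq, ite_true, ite_false,
    Polynomial.eval_sub, Polynomial.eval_mul, Polynomial.eval_add,
    Polynomial.eval_X, Polynomial.eval_C, Polynomial.eval_neg] at hz
  push_cast at hz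
  set P := μ * (k11 + k13 * b3) + a * b1 with hP
  set R := μ * (k22 + k23 * b3) + b * b2 with hR
  set W := μ * k33 + c * b3 with hW
  set Q := (μ * k13 + 1) * b1 with hQ
  set S := (μ * k23 + 1) * b2 with hS
  set U := d * b3 with hU
  set V := e * b3 with hV
  have hPp : 0 < P := by positivity
  have hRp : 0 < R := by positivity
  have hWp : 0 < W := by positivity
  have hQp : 0 < Q := by positivity
  have hSp : 0 < S := by positivity
  have hUp : 0 < U := by positivity
  have hVp : 0 < V := by positivity
  have h2 : 0 < P + R + W := by positivity
  have h1 : 0 < P*R + P*W + R*W + Q*U + S*V := by positivity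
  have h0 : 0 < P*R*W + P*S*V + Q*R*U := by positivity
  have hRH : P*R*W + P*S*V + Q*R*U < (P + R + W) * (P*R + P*W + R*W + Q*U + S*V) := by
    nlinarith [mul_pos (mul_pos (by positivity : (0:ℝ) < P+R) (by positivity : (0:ℝ) < P+W)) (by positivity : (0:ℝ) < R+W),
      mul_pos (mul_pos hQp hUp) (by positivity : (0:ℝ) < P+W),
      mul_pos (mul_pos hSp hVp) (by positivity : (0:ℝ) < R+W)]
  refine cubicRH (P + R + W) (P*R + P*W + R*W + Q*U + S*V) (P*R*W + P*S*V + Q*R*U)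
    h2 h1 h0 hRH z ?_
  push_cast [hP, hR, hW, hQ, hS, hU, hV]
  linear_combination hz
end
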